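/- Fix labels y_1,...,y_n ∈ {1,...,K} with class counts n_k = #{i : y_i = k} ≥ 1 for every k, and let X_1,...,X_n be independent random vectors in ℝ^d where X_i has density f*_{y_i}. Let g_1,...,g_K : ℝ^d → ℝ be measurable functions. For b,k ∈ {1,...,K} let ν_{b,k} = E[g_b(X)] for X with density f*_k, assume the centered log-moment-generating function ψ_{b,k}(s) = log E[exp(s(g_b(X) − ν_{b,k}))] (X having density f*_k) is finite for all s ∈ ℝ, and set ψ*_{b,k}(t) = sup_{s∈ℝ}(st − ψ_{b,k}(s)). Then for every t > 0, the probability that simultaneously for every permutation π of {1,...,K} one has (1/n) Σ_{i=1}^n ( g_{π(y_i)}(X_i) − ν_{π(y_i), y_i} ) < t is at least 1 − K² exp( −(min_k n_k) · inf_{b,k} ψ*_{b,k}(t) ). -/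

import Mathlib

open MeasureTheory ProbabilityTheory

/-- **Lemma 1 (uniform Chernoff bound over permutations), conditional on labels.**
Fixed labels `y i ∈ Fin K` with every class count `n_k ≥ 1`, independent samples `X i`
where `X i` has density `fstar (y i)` on `ℝ^d`, and measurable functions `g b` with
per-class means `ν b k`, finite centered log-mgfs `ψ b k` and duals `ψstar b k`.
For every `t > 0`, with probability at least
`1 - K² exp(-(min_k n_k) · inf_{b,k} ψ*_{b,k}(t))`, simultaneously for every
permutation `π`, `(1/n) Σ_i (g_{π(y_i)}(X_i) - ν_{π(y_i), y_i}) < t`. -/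
theorem uniform_chernoff_over_permutations
    {Ω : Type*} [MeasurableSpace Ω] (P : Measure Ω) [IsProbabilityMeasure P]
    (d K n : ℕ) (hK : 2 ≤ K)
    -- fixed labels with all class counts at least one
    (y : Fin n → Fin K)
    (hcount : ∀ k : Fin K, 1 ≤ (Finset.univ.filter (fun i => y i = k)).card)
    -- class-conditional densities on ℝ^d
    (fstar : Fin K → (Fin d → ℝ) → ℝ)
    (hfstar_meas : ∀ k, Measurable (fstar k))
    (hfstar_nonneg : ∀ k x, 0 ≤ fstar k x)
    (hfstar_int : ∀ k, ∫ x, fstar k x = 1)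
    -- independent samples, X i has density fstar (y i)
    (X : Fin n → Ω → (Fin d → ℝ))
    (hX_meas : ∀ i, Measurable (X i))
    (hX_indep : iIndepFun X P)
    (hX_law : ∀ i, Measure.map (X i) P
      = volume.withDensity (fun x => ENNReal.ofReal (fstar (y i) x)))
    -- measurable functions g b with per-class means ν b k
    (g : Fin K → (Fin d → ℝ) → ℝ)
    (hg_meas : ∀ b, Measurable (g b))
    (ν : Fin K → Fin K → ℝ)
    (hν_int : ∀ b k, Integrable (fun x => g b x * fstar k x))
    (hν : ∀ b k, ν b k = ∫ x, g b x * fstar k x)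
    -- centered log moment generating functions, assumed finite for all s
    (ψ : Fin K → Fin K → ℝ → ℝ)
    (hψ_fin : ∀ b k s, Integrable (fun x => Real.exp (s * (g b x - ν b k)) * fstar k x))
    (hψ : ∀ b k s, ψ b k s = Real.log (∫ x, Real.exp (s * (g b x - ν b k)) * fstar k x))
    -- Fenchel–Legendre duals
    (ψstar : Fin K → Fin K → ℝ → ℝ)
    (hψstar : ∀ b k t, ψstar b k t = ⨆ s : ℝ, (s * t - ψ b k s))
    (t : ℝ) (ht : 0 < t) :
    1 - (K : ℝ) ^ 2 *
        Real.exp (-((⨅ k : Fin K, ((Finset.univ.filter (fun i => y i = k)).card : ℝ)) *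
          ⨅ bk : Fin K × Fin K, ψstar bk.1 bk.2 t))
      ≤ (P {ω | ∀ π : Equiv.Perm (Fin K),
          (1 / (n : ℝ)) * ∑ i, (g (π (y i)) (X i ω) - ν (π (y i)) (y i)) < t}).toReal := by
  classical
  have hKpos : 0 < K := by omega
  haveI : Nonempty (Fin K) := ⟨⟨0, hKpos⟩⟩
  set C : Fin K → Finset (Fin n) := fun k => Finset.univ.filter (fun i => y i = k) with hCdef
  set nk : Fin K → ℕ := fun k => (C k).card with hnkdef
  -- total count
  have hn_sum : ∑ k : Fin K, nk k = n := by
    have := Finset.card_eq_sum_card_fiberwise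
      (f := y) (s := (Finset.univ : Finset (Fin n))) (t := (Finset.univ : Finset (Fin K)))
      (fun i _ => Finset.mem_univ _)
    simpa [hnkdef, hCdef, Finset.card_univ] using this.symm
  have hnk_one : ∀ k, 1 ≤ nk k := fun k => hcount k
  have hnpos : 0 < n := by
    have h1 : nk ⟨0, hKpos⟩ ≤ ∑ k : Fin K, nk k :=
      Finset.single_le_sum (f := nk) (fun _ _ => Nat.zero_le _) (Finset.mem_univ _)
    have h2 := hnk_one ⟨0, hKpos⟩
    omega
  -- fstar is integrable
  have hfstar_integrable : ∀ k, Integrable (fstar k) := by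
    intro k
    by_contra h
    have h0 := hfstar_int k
    rw [integral_undef h] at h0
    exact one_ne_zero h0.symm
  -- integrals against the density measure
  have hdens_eq : ∀ (k : Fin K) (h : (Fin d → ℝ) → ℝ),
      ∫ x, h x ∂(volume.withDensity (fun x => ENNReal.ofReal (fstar k x)))
        = ∫ x, h x * fstar k x := by
    intro k h
    have heq : (fun x => ENNReal.ofReal (fstar k x))
        = (fun x => (((fstar k x).toNNReal : NNReal) : ENNReal)) := rfl
    rw [heq, integral_withDensity_eq_integral_smul
      (f := fun x => (fstar k x).toNNReal) (hfstar_meas k).real_toNNReal]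
    refine integral_congr_ae (Filter.Eventually.of_forall fun x => ?_)
    simp [NNReal.smul_def, Real.coe_toNNReal _ (hfstar_nonneg k x), mul_comm]
  have hdens_int : ∀ (k : Fin K) (h : (Fin d → ℝ) → ℝ),
      Integrable (fun x => h x * fstar k x) →
        Integrable h (volume.withDensity (fun x => ENNReal.ofReal (fstar k x))) := by
    intro k h hint
    have hf' : Measurable (fun x : Fin d → ℝ => ENNReal.ofReal (fstar k x)) :=
      ENNReal.measurable_ofReal.comp (hfstar_meas k)
    rw [integrable_withDensity_iff hf'
      (Filter.Eventually.of_forall fun x => ENNReal.ofReal_lt_top)]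
    refine hint.congr (Filter.Eventually.of_forall fun x => ?_)
    simp only [ENNReal.toReal_ofReal (hfstar_nonneg k x)]
  -- transfer along the law of X i
  have hmap_int : ∀ (b k : Fin K) (s : ℝ) (i : Fin n), y i = k →
      Integrable (fun ω => Real.exp (s * (g b (X i ω) - ν b k))) P := by
    intro b k s i hyi
    have hmeas : Measurable (fun x : Fin d → ℝ => Real.exp (s * (g b x - ν b k))) :=
      (((hg_meas b).sub measurable_const).const_mul s).exp
    have h1 : Integrable (fun x : Fin d → ℝ => Real.exp (s * (g b x - ν b k)))
        (Measure.map (X i) P) := by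
      rw [hX_law i, hyi]
      exact hdens_int k _ (hψ_fin b k s)
    exact h1.comp_measurable (hX_meas i)
  have hmap_eq : ∀ (b k : Fin K) (s : ℝ) (i : Fin n), y i = k →
      ∫ ω, Real.exp (s * (g b (X i ω) - ν b k)) ∂P
        = ∫ x, Real.exp (s * (g b x - ν b k)) * fstar k x := by
    intro b k s i hyi
    have hmeas : Measurable (fun x : Fin d → ℝ => Real.exp (s * (g b x - ν b k))) :=
      (((hg_meas b).sub measurable_const).const_mul s).exp
    have h1 : ∫ ω, Real.exp (s * (g b (X i ω) - ν b k)) ∂P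
        = ∫ x, Real.exp (s * (g b x - ν b k)) ∂(Measure.map (X i) P) :=
      (integral_map (hX_meas i).aemeasurable hmeas.aestronglyMeasurable).symm
    rw [h1, hX_law i, hyi, hdens_eq k]
  -- ψ b k 0 = 0 and ψ nonneg
  have hψ_zero : ∀ b k, ψ b k 0 = 0 := by
    intro b k
    rw [hψ]
    have : ∫ x, Real.exp (0 * (g b x - ν b k)) * fstar k x = 1 := by
      simpa using hfstar_int k
    rw [this, Real.log_one]
  have hψ_nonneg : ∀ b k s, 0 ≤ ψ b k s := by
    intro b k s
    have hrw : (fun x => (1 + s * (g b x - ν b k)) * fstar k x)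
        = fun x => (fstar k x + s * (g b x * fstar k x)) - (s * ν b k) * fstar k x := by
      ext x; ring
    have i0 : Integrable (fun x => fstar k x) := hfstar_integrable k
    have i1 : Integrable (fun x => s * (g b x * fstar k x)) := (hν_int b k).const_mul s
    have i2 : Integrable (fun x => fstar k x + s * (g b x * fstar k x)) := i0.add i1
    have i3 : Integrable (fun x => (s * ν b k) * fstar k x) := i0.const_mul _
    have hint1 : Integrable (fun x => (1 + s * (g b x - ν b k)) * fstar k x) := by
      rw [hrw]; exact i2.sub i3
    have hle : ∀ x, (1 + s * (g b x - ν b k)) * fstar k x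
        ≤ Real.exp (s * (g b x - ν b k)) * fstar k x := by
      intro x
      refine mul_le_mul_of_nonneg_right ?_ (hfstar_nonneg k x)
      linarith [Real.add_one_le_exp (s * (g b x - ν b k))]
    have hval : ∫ x, (1 + s * (g b x - ν b k)) * fstar k x = 1 := by
      rw [hrw, integral_sub i2 i3, integral_add i0 i1,
        integral_const_mul, integral_const_mul, hfstar_int k, ← hν b k]
      ring
    have h1 : (1 : ℝ) ≤ ∫ x, Real.exp (s * (g b x - ν b k)) * fstar k x := by
      calc (1:ℝ) = ∫ x, (1 + s * (g b x - ν b k)) * fstar k x := hval.symm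
        _ ≤ _ := integral_mono hint1 (hψ_fin b k s) hle
    rw [hψ]
    exact Real.log_nonneg h1
  have hψstar_nonneg : ∀ b k, 0 ≤ ψstar b k t := by
    intro b k
    rw [hψstar]
    by_cases hbdd : BddAbove (Set.range fun s => s * t - ψ b k s)
    · have h0 : (0:ℝ) = 0 * t - ψ b k 0 := by rw [hψ_zero]; ring
      calc (0:ℝ) = 0 * t - ψ b k 0 := h0
        _ ≤ ⨆ s : ℝ, (s * t - ψ b k s) := le_ciSup hbdd 0
    · rw [Real.iSup_of_not_bddAbove hbdd]
  -- the key Chernoff bound for each pair (b, k)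
  have key : ∀ b k : Fin K,
      (P {ω | (nk k : ℝ) * t ≤ ∑ i ∈ C k, (g b (X i ω) - ν b k)}).toReal
        ≤ Real.exp (-((nk k : ℝ) * ψstar b k t)) := by
    intro b k
    set Y : Fin n → Ω → ℝ := fun i ω => g b (X i ω) - ν b k with hYdef
    have hYmeas : ∀ i, Measurable (Y i) :=
      fun i => ((hg_meas b).comp (hX_meas i)).sub measurable_const
    have hYindep : iIndepFun Y P :=
      hX_indep.comp (fun _ x => g b x - ν b k) (fun _ => (hg_meas b).sub measurable_const)
    have hYint : ∀ (s : ℝ), ∀ i ∈ C k, Integrable (fun ω => Real.exp (s * Y i ω)) P := by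
      intro s i hi
      exact hmap_int b k s i (Finset.mem_filter.mp hi).2
    have hYcgf : ∀ (s : ℝ), ∀ i ∈ C k, cgf (Y i) P s = ψ b k s := by
      intro s i hi
      have := hmap_eq b k s i (Finset.mem_filter.mp hi).2
      simp only [cgf, mgf, hYdef]
      rw [this, ← hψ]
    have hset : {ω | (nk k : ℝ) * t ≤ ∑ i ∈ C k, (g b (X i ω) - ν b k)}
        = {ω | (nk k : ℝ) * t ≤ (∑ i ∈ C k, Y i) ω} := by
      ext ω; simp [hYdef, Finset.sum_apply]
    rw [hset]
    set q := (P {ω | (nk k : ℝ) * t ≤ (∑ i ∈ C k, Y i) ω}).toReal with hq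
    have hq1 : q ≤ 1 := by
      simpa using ENNReal.toReal_mono ENNReal.one_ne_top prob_le_one
    have hchern : ∀ s : ℝ, 0 ≤ s → q ≤ Real.exp (-((nk k : ℝ) * (s * t - ψ b k s))) := by
      intro s hs
      have hint_sum : Integrable (fun ω => Real.exp (s * (∑ i ∈ C k, Y i) ω)) P :=
        hYindep.integrable_exp_mul_sum hYmeas (hYint s)
      have h1 := measure_ge_le_exp_cgf (μ := P) (X := ∑ i ∈ C k, Y i)
        ((nk k : ℝ) * t) hs hint_sum
      have h2 : cgf (∑ i ∈ C k, Y i) P s = (nk k : ℝ) * ψ b k s := by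
        rw [hYindep.cgf_sum hYmeas (hYint s), Finset.sum_congr rfl (hYcgf s),
          Finset.sum_const, nsmul_eq_mul]
      calc q ≤ Real.exp (-s * ((nk k : ℝ) * t) + cgf (∑ i ∈ C k, Y i) P s) := h1
        _ = Real.exp (-((nk k : ℝ) * (s * t - ψ b k s))) := by rw [h2]; ring_nf
    rcases eq_or_lt_of_le (ENNReal.toReal_nonneg : 0 ≤ q) with h0 | hqpos
    · calc q = 0 := hq.trans h0.symm
        _ ≤ _ := (Real.exp_pos _).le
    · have hnkpos : (0:ℝ) < (nk k : ℝ) := by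
        have := hnk_one k; exact_mod_cast Nat.lt_of_lt_of_le Nat.zero_lt_one this
      have hlogq : Real.log q ≤ 0 := Real.log_nonpos hqpos.le hq1
      have hub : ∀ s : ℝ, s * t - ψ b k s ≤ -Real.log q / (nk k : ℝ) := by
        intro s
        rcases le_or_gt 0 s with hs | hs
        · have hc := hchern s hs
          have hlog := Real.log_le_log hqpos hc
          rw [Real.log_exp] at hlog
          rw [le_div_iff₀ hnkpos]
          nlinarith
        · have h1 : s * t - ψ b k s ≤ 0 := by
            have h2 := hψ_nonneg b k s
            nlinarith [mul_neg_of_neg_of_pos hs ht]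
          exact h1.trans (div_nonneg (neg_nonneg.mpr hlogq) hnkpos.le)
      have hsup : ψstar b k t ≤ -Real.log q / (nk k : ℝ) := by
        rw [hψstar]
        exact Real.iSup_le hub (div_nonneg (neg_nonneg.mpr hlogq) hnkpos.le)
      have hfin : Real.log q ≤ -((nk k : ℝ) * ψstar b k t) := by
        have := (le_div_iff₀ hnkpos).mp hsup
        nlinarith
      calc q = Real.exp (Real.log q) := (Real.exp_log hqpos).symm
        _ ≤ _ := Real.exp_le_exp.mpr hfin
  -- the main event
  set E : Set Ω := {ω | ∀ π : Equiv.Perm (Fin K),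
      (1 / (n : ℝ)) * ∑ i, (g (π (y i)) (X i ω) - ν (π (y i)) (y i)) < t} with hEdef
  have hEmeas : MeasurableSet E := by
    have hrw : E = ⋂ π : Equiv.Perm (Fin K),
        {ω | (1 / (n : ℝ)) * ∑ i, (g (π (y i)) (X i ω) - ν (π (y i)) (y i)) < t} := by
      ext ω; simp [hEdef, Set.mem_iInter]
    rw [hrw]
    refine MeasurableSet.iInter fun π => ?_
    exact measurableSet_lt ((Finset.measurable_sum _ fun i _ =>
      ((hg_meas _).comp (hX_meas i)).sub measurable_const).const_mul _) measurable_const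
  set A : Fin K × Fin K → Set Ω := fun bk =>
    {ω | ((nk bk.2 : ℝ)) * t ≤ ∑ i ∈ C bk.2, (g bk.1 (X i ω) - ν bk.1 bk.2)} with hAdef
  have hsub : Eᶜ ⊆ ⋃ bk : Fin K × Fin K, A bk := by
    intro ω hω
    simp only [hEdef, Set.mem_compl_iff, Set.mem_setOf_eq, not_forall, not_lt] at hω
    obtain ⟨π, hπ⟩ := hω
    have hnpos' : (0:ℝ) < n := by exact_mod_cast hnpos
    have htot : (n:ℝ) * t ≤ ∑ i, (g (π (y i)) (X i ω) - ν (π (y i)) (y i)) := by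
      rw [one_div] at hπ
      have h2 := mul_le_mul_of_nonneg_left hπ (le_of_lt hnpos')
      rwa [← mul_assoc, mul_inv_cancel₀ (ne_of_gt hnpos'), one_mul] at h2
    have hfib : ∑ i, (g (π (y i)) (X i ω) - ν (π (y i)) (y i))
        = ∑ k : Fin K, ∑ i ∈ C k, (g (π k) (X i ω) - ν (π k) k) := by
      rw [← Finset.sum_fiberwise Finset.univ y
        (fun i => g (π (y i)) (X i ω) - ν (π (y i)) (y i))]
      refine Finset.sum_congr rfl fun k _ => Finset.sum_congr rfl fun i hi => ?_
      have hyi : y i = k := (Finset.mem_filter.mp hi).2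
      rw [hyi]
    by_contra hnot
    simp only [Set.mem_iUnion, not_exists, hAdef, Set.mem_setOf_eq, not_le] at hnot
    have hlt : ∑ k : Fin K, ∑ i ∈ C k, (g (π k) (X i ω) - ν (π k) k)
        < ∑ k : Fin K, (nk k : ℝ) * t :=
      Finset.sum_lt_sum_of_nonempty Finset.univ_nonempty (fun k _ => hnot (π k, k))
    have hsum_nk : ∑ k : Fin K, (nk k : ℝ) * t = (n:ℝ) * t := by
      rw [← Finset.sum_mul]
      congr 1
      exact_mod_cast congrArg (fun m : ℕ => (m : ℝ)) hn_sum
    rw [hfib] at htot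
    rw [hsum_nk] at hlt
    linarith
  -- infima
  set I : ℝ := ⨅ bk : Fin K × Fin K, ψstar bk.1 bk.2 t with hIdef
  set m : ℝ := ⨅ k : Fin K, ((Finset.univ.filter (fun i => y i = k)).card : ℝ) with hmdef
  have hm_eq : m = ⨅ k : Fin K, (nk k : ℝ) := rfl
  have hm_le : ∀ k : Fin K, m ≤ (nk k : ℝ) := by
    intro k
    rw [hm_eq]
    exact ciInf_le (Finite.bddBelow_range _) k
  have hI_le : ∀ bk : Fin K × Fin K, I ≤ ψstar bk.1 bk.2 t :=
    fun bk => ciInf_le (Finite.bddBelow_range _) bk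
  have hI_nonneg : 0 ≤ I := le_ciInf fun bk => hψstar_nonneg bk.1 bk.2
  -- union bound
  have hunion : (P Eᶜ).toReal ≤ (K:ℝ)^2 * Real.exp (-(m * I)) := by
    have h1 : P Eᶜ ≤ ∑ bk : Fin K × Fin K, P (A bk) :=
      (measure_mono hsub).trans (measure_iUnion_fintype_le P A)
    have h2 : (P Eᶜ).toReal ≤ ∑ bk : Fin K × Fin K, (P (A bk)).toReal := by
      rw [← ENNReal.toReal_sum (fun bk _ => measure_ne_top P _)]
      exact ENNReal.toReal_mono
        (ENNReal.sum_ne_top.mpr fun bk _ => measure_ne_top P _) h1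
    refine h2.trans ?_
    have h3 : ∀ bk : Fin K × Fin K, (P (A bk)).toReal ≤ Real.exp (-(m * I)) := by
      intro bk
      refine (key bk.1 bk.2).trans ?_
      apply Real.exp_le_exp.mpr
      have h4 : m * I ≤ (nk bk.2 : ℝ) * ψstar bk.1 bk.2 t :=
        mul_le_mul (hm_le bk.2) (hI_le bk) hI_nonneg (Nat.cast_nonneg _)
      linarith
    calc ∑ bk : Fin K × Fin K, (P (A bk)).toReal
        ≤ ∑ _bk : Fin K × Fin K, Real.exp (-(m * I)) :=
          Finset.sum_le_sum fun bk _ => h3 bk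
      _ = (K:ℝ)^2 * Real.exp (-(m * I)) := by
          rw [Finset.sum_const, Finset.card_univ, Fintype.card_prod, Fintype.card_fin,
            nsmul_eq_mul]
          push_cast
          ring
  have hcompl : (P Eᶜ).toReal = 1 - (P E).toReal := by
    have h := measure_compl hEmeas (measure_ne_top P E)
    rw [measure_univ] at h
    rw [h, ENNReal.toReal_sub_of_le prob_le_one ENNReal.one_ne_top, ENNReal.toReal_one]
  rw [hcompl] at hunion
  linarith
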